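/- Define w(x,y) = (x² − y²) ln(−ln(x² + y²)) for 0 < x² + y² ≤ 1/4 and w(0,0) = 0. Then w is not twice differentiable at the origin. -/

import Mathlib

open Filter Topology Metric Set

noncomputable def pd {n : ℕ} (i : Fin n) (f : EuclideanSpace ℝ (Fin n) → ℝ)
    (x : EuclideanSpace ℝ (Fin n)) : ℝ :=
  fderiv ℝ f x (EuclideanSpace.single i 1)

noncomputable def spd {n : ℕ} (i j : Fin n) (f : EuclideanSpace ℝ (Fin n) → ℝ)
    (x : EuclideanSpace ℝ (Fin n)) : ℝ :=
  pd i (pd j f) x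

noncomputable def lap {n : ℕ} (f : EuclideanSpace ℝ (Fin n) → ℝ)
    (x : EuclideanSpace ℝ (Fin n)) : ℝ :=
  ∑ i, spd i i f x

def TwiceDiffAt {n : ℕ} (f : EuclideanSpace ℝ (Fin n) → ℝ)
    (p : EuclideanSpace ℝ (Fin n)) : Prop :=
  (∀ᶠ x in 𝓝 p, DifferentiableAt ℝ f x) ∧
  DifferentiableAt ℝ (fderiv ℝ f) p ∧
  Tendsto (fun x => (f x - f p - fderiv ℝ f p (x - p)
      - (1/2) * fderiv ℝ (fderiv ℝ f) p (x - p) (x - p)) / ‖x - p‖^2)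
    (𝓝[≠] p) (𝓝 0)

open scoped Classical in
noncomputable def wFun (x : EuclideanSpace ℝ (Fin 2)) : ℝ :=
  if x = 0 then 0
  else ((x 0)^2 - (x 1)^2) * Real.log (-Real.log ((x 0)^2 + (x 1)^2))

theorem stmt3 : ¬ TwiceDiffAt wFun 0 := by
  rintro ⟨-, -, hT⟩
  set L := fderiv ℝ wFun 0 with hLdef
  set B := fderiv ℝ (fderiv ℝ wFun) 0 with hBdef
  set e₀ : EuclideanSpace ℝ (Fin 2) := EuclideanSpace.single 0 1 with he
  set a : ℝ := L e₀ with ha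
  set b : ℝ := B e₀ e₀ with hb
  have he0 : e₀ ≠ 0 := by
    intro h
    have : (e₀ : EuclideanSpace ℝ (Fin 2)) 0 = 0 := by rw [h]; rfl
    simp [he, EuclideanSpace.single_apply] at this
  have hφcont : Continuous (fun t : ℝ => t • e₀) := continuous_id.smul continuous_const
  have hφ : Tendsto (fun t : ℝ => t • e₀) (𝓝[≠] (0:ℝ))
      (𝓝[≠] (0 : EuclideanSpace ℝ (Fin 2))) := by
    apply tendsto_nhdsWithin_of_tendsto_nhds_of_eventually_within
    · have := (hφcont.tendsto 0).mono_left (nhdsWithin_le_nhds (s := {(0:ℝ)}ᶜ))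
      simpa using this
    · filter_upwards [self_mem_nhdsWithin] with t ht
      exact smul_ne_zero ht he0
  have h1 := hT.comp hφ
  have hneg : Tendsto (fun t : ℝ => -t) (𝓝[≠] (0:ℝ)) (𝓝[≠] (0:ℝ)) := by
    apply tendsto_nhdsWithin_of_tendsto_nhds_of_eventually_within
    · have := (continuous_neg (G := ℝ)).tendsto 0
      simpa using this.mono_left (nhdsWithin_le_nhds (s := {(0:ℝ)}ᶜ))
    · filter_upwards [self_mem_nhdsWithin] with t ht
      simpa using ht
  have h2 := h1.comp hneg
  have h3 := h1.add h2
  rw [add_zero] at h3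
  -- compute F(s • e₀)
  have hw : ∀ s : ℝ, s ≠ 0 → wFun (s • e₀) = s^2 * Real.log (-Real.log (s^2)) := by
    intro s hs
    have hne : s • e₀ ≠ 0 := smul_ne_zero hs he0
    have h0 : (s • e₀) 0 = s := by
      simp [he, EuclideanSpace.single_apply, PiLp.smul_apply]
    have h1' : (s • e₀) 1 = 0 := by
      simp [he, EuclideanSpace.single_apply, PiLp.smul_apply]
    simp only [wFun, if_neg hne, h0, h1']
    ring_nf
  have hnorm : ∀ s : ℝ, ‖s • e₀‖ = |s| := by
    intro s
    rw [norm_smul]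
    simp [he, EuclideanSpace.norm_single]
  have hLs : ∀ s : ℝ, L (s • e₀) = s * a := by
    intro s; rw [map_smul]; rfl
  have hBs : ∀ s : ℝ, B (s • e₀) (s • e₀) = s * (s * b) := by
    intro s
    simp only [map_smul, ContinuousLinearMap.smul_apply, smul_eq_mul]; rfl
  have hkey : ∀ t : ℝ, t ≠ 0 →
      ((fun x => (wFun x - wFun 0 - L (x - 0)
        - (1/2) * B (x - 0) (x - 0)) / ‖x - 0‖^2) ∘ fun t : ℝ => t • e₀) t
      + (((fun x => (wFun x - wFun 0 - L (x - 0)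
        - (1/2) * B (x - 0) (x - 0)) / ‖x - 0‖^2) ∘ fun t : ℝ => t • e₀) ∘ fun t => -t) t
      = 2 * Real.log (-Real.log (t^2)) - b := by
    intro t ht
    have hw0 : wFun 0 = 0 := by simp [wFun]
    simp only [Function.comp_apply, sub_zero, hw0]
    rw [hw t ht, hw (-t) (neg_ne_zero.mpr ht), hLs, hLs, hBs, hBs, hnorm, hnorm]
    rw [abs_neg, neg_pow, sq_abs]
    have ht2 : t^2 ≠ 0 := pow_ne_zero 2 ht
    field_simp
    ring
  have h3' : Tendsto (fun t : ℝ => 2 * Real.log (-Real.log (t^2)) - b)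
      (𝓝[≠] (0:ℝ)) (𝓝 0) := by
    refine h3.congr' ?_
    filter_upwards [self_mem_nhdsWithin] with t ht
    exact hkey t ht
  -- but the function tends to atTop
  have ht2 : Tendsto (fun t : ℝ => t^2) (𝓝[≠] (0:ℝ)) (𝓝[>] (0:ℝ)) := by
    apply tendsto_nhdsWithin_of_tendsto_nhds_of_eventually_within
    · have : Tendsto (fun t : ℝ => t^2) (𝓝 0) (𝓝 0) := by
        simpa using (continuous_pow 2).tendsto (0:ℝ)
      exact this.mono_left nhdsWithin_le_nhds
    · filter_upwards [self_mem_nhdsWithin] with t ht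
      exact pow_two_pos_of_ne_zero ht
  have htop : Tendsto (fun t : ℝ => 2 * Real.log (-Real.log (t^2)) - b)
      (𝓝[≠] (0:ℝ)) atTop := by
    have hlog : Tendsto (fun t : ℝ => Real.log (t^2)) (𝓝[≠] (0:ℝ)) atBot :=
      Real.tendsto_log_nhdsGT_zero.comp ht2
    have hneglog : Tendsto (fun t : ℝ => -Real.log (t^2)) (𝓝[≠] (0:ℝ)) atTop :=
      tendsto_neg_atBot_atTop.comp hlog
    have hll : Tendsto (fun t : ℝ => Real.log (-Real.log (t^2))) (𝓝[≠] (0:ℝ)) atTop :=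
      Real.tendsto_log_atTop.comp hneglog
    have h2l : Tendsto (fun t : ℝ => 2 * Real.log (-Real.log (t^2))) (𝓝[≠] (0:ℝ)) atTop := by
      exact hll.const_mul_atTop (by norm_num)
    simpa [sub_eq_add_neg] using tendsto_atTop_add_const_right _ (-b) h2l
  exact not_tendsto_nhds_of_tendsto_atTop htop 0 h3'
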